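/- Let G be a topological group and let φ : G → ℂ be a function with φ(1) = 1. Suppose that for every compact subset Q of G and every ε > 0 there exist finitely many functions of positive type ψ₁, …, ψ_n on G such that |φ(g) − Σ_{j=1}^n ψ_j(g)| ≤ ε for all g ∈ Q (i.e. φ is a limit, uniformly on compact subsets of G, of finite sums of functions of positive type). Then for every compact subset Q of G and every ε > 0 there exist finitely many functions of positive type χ₁, …, χ_n on G with χ_j(1) = 1 and real coefficients c₁, …, c_n ≥ 0 with Σ_{j=1}^n c_j = 1 such that |φ(g) − Σ_{j=1}^n c_j χ_j(g)| ≤ ε for all g ∈ Q (i.e. φ is a limit, uniformly on compact subsets of G, of convex combinations of functions of positive type normalized at the identity). -/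

import Mathlib

noncomputable section

open scoped ENNReal

open scoped ComplexOrder

/-- A function `ψ : G → ℂ` is of positive type if for all `g₁, …, g_n ∈ G` and
`λ₁, …, λ_n ∈ ℂ` one has `∑_{j,k} ψ(g_j⁻¹ g_k) conj(λ_j) λ_k ≥ 0`. -/
def IsOfPositiveType {G : Type*} [Group G] (ψ : G → ℂ) : Prop :=
  ∀ (n : ℕ) (g : Fin n → G) (lam : Fin n → ℂ),
    0 ≤ ∑ j : Fin n, ∑ k : Fin n, ψ ((g j)⁻¹ * g k) * (starRingEnd ℂ) (lam j) * lam k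

lemma posType_one_nonneg {G : Type*} [Group G] {ψ : G → ℂ} (h : IsOfPositiveType ψ) :
    0 ≤ ψ 1 := by
  have := h 1 (fun _ => 1) (fun _ => 1)
  simpa using this

lemma posType_two {G : Type*} [Group G] {ψ : G → ℂ} (h : IsOfPositiveType ψ)
    (g : G) (lam : ℂ) :
    0 ≤ ψ 1 + ψ g * lam + ψ g⁻¹ * (starRingEnd ℂ) lam
      + ψ 1 * ((starRingEnd ℂ) lam * lam) := by
  have := h 2 ![1, g] ![1, lam]
  simp [Fin.sum_univ_two] at this
  convert this using 1
  ring

lemma posType_one_real {G : Type*} [Group G] {ψ : G → ℂ} (h : IsOfPositiveType ψ) :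
    ψ 1 = ((ψ 1).re : ℂ) := by
  have h0 := posType_one_nonneg h
  rw [Complex.le_def] at h0
  exact Complex.ext rfl (by simpa using h0.2.symm)

lemma posType_conj {G : Type*} [Group G] {ψ : G → ℂ} (h : IsOfPositiveType ψ) (g : G) :
    ψ g⁻¹ = (starRingEnd ℂ) (ψ g) := by
  have h1 := posType_two h g 1
  have hI := posType_two h g Complex.I
  rw [Complex.le_def] at h1 hI
  have e1 := h1.2
  have eI := hI.2
  have h0 := (Complex.le_def.mp (posType_one_nonneg h)).2
  simp [Complex.add_im, Complex.mul_im, Complex.conj_im, Complex.conj_re,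
    Complex.I_re, Complex.I_im] at e1 eI h0
  apply Complex.ext <;> simp [Complex.conj_re, Complex.conj_im] <;> linarith

lemma posType_bound {G : Type*} [Group G] {ψ : G → ℂ} (h : IsOfPositiveType ψ) (g : G) :
    ‖ψ g‖ ≤ (ψ 1).re := by
  rcases eq_or_ne (ψ g) 0 with h0 | h0
  · simp [h0]
    exact (Complex.le_def.mp (posType_one_nonneg h)).1
  · set a := ψ g with ha
    have habs : (0:ℝ) < ‖a‖ := norm_pos_iff.mpr h0
    set lam : ℂ := -(starRingEnd ℂ) a / (‖a‖) with hlam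
    have key := posType_two h g lam
    have hginv : ψ g⁻¹ = (starRingEnd ℂ) a := posType_conj h g
    have hpsi1 : ψ 1 = ((ψ 1).re : ℂ) := posType_one_real h
    have hmul : a * (starRingEnd ℂ) a = ((‖a‖ : ℝ) : ℂ)^2 := by
      rw [Complex.mul_conj]
      norm_cast
      exact (Complex.sq_norm a).symm
    have hmul2 : (starRingEnd ℂ) a * a = ((‖a‖ : ℝ) : ℂ)^2 := by
      rw [mul_comm]; exact hmul
    have hexpr : ψ 1 + ψ g * lam + ψ g⁻¹ * (starRingEnd ℂ) lam
        + ψ 1 * ((starRingEnd ℂ) lam * lam)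
        = 2 * (((ψ 1).re : ℂ) - (‖a‖ : ℝ)) := by
      rw [hginv, hpsi1, hlam, ← ha]
      have hane : ((‖a‖ : ℝ) : ℂ) ≠ 0 := by
        simpa using habs.ne'
      simp only [map_neg, map_div₀, Complex.conj_conj, Complex.conj_ofReal, Complex.ofReal_re]
      linear_combination (norm := skip) (-2 / ((‖a‖ : ℝ) : ℂ) + ((ψ 1).re : ℂ) / ((‖a‖ : ℝ) : ℂ)^2) * hmul
      field_simp
      ring
    rw [hexpr, Complex.le_def] at key
    have := key.1
    simp at this
    linarith

lemma posType_const_one {G : Type*} [Group G] : IsOfPositiveType (fun _ : G => (1:ℂ)) := by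
  intro n g lam
  have : ∑ j : Fin n, ∑ k : Fin n, (1:ℂ) * (starRingEnd ℂ) (lam j) * lam k
      = star (∑ j : Fin n, lam j) * (∑ k : Fin n, lam k) := by
    rw [star_sum, Finset.sum_mul]
    refine Finset.sum_congr rfl fun j _ => ?_
    rw [Finset.mul_sum]
    refine Finset.sum_congr rfl fun k _ => ?_
    simp only [one_mul]; rfl
  rw [this]
  exact star_mul_self_nonneg _

lemma posType_smul {G : Type*} [Group G] {ψ : G → ℂ} (h : IsOfPositiveType ψ)
    {c : ℝ} (hc : 0 ≤ c) : IsOfPositiveType (fun g => (c:ℂ) * ψ g) := by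
  intro n g lam
  have : ∑ j : Fin n, ∑ k : Fin n, (c:ℂ) * ψ ((g j)⁻¹ * g k) * (starRingEnd ℂ) (lam j) * lam k
      = (c:ℂ) * ∑ j : Fin n, ∑ k : Fin n, ψ ((g j)⁻¹ * g k) * (starRingEnd ℂ) (lam j) * lam k := by
    rw [Finset.mul_sum]
    refine Finset.sum_congr rfl fun j _ => ?_
    rw [Finset.mul_sum]
    refine Finset.sum_congr rfl fun k _ => ?_
    ring
  rw [this]
  exact mul_nonneg (by exact_mod_cast hc) (h n g lam)

/-- If a function `φ` on a topological group, with `φ(1) = 1`, is a limit, uniformly on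
compact subsets, of finite sums of functions of positive type, then it is also a limit,
uniformly on compact subsets, of convex combinations of functions of positive type
normalized at the identity. -/
theorem convex_combination_of_sums_of_positiveType
    {G : Type*} [Group G] [TopologicalSpace G] [IsTopologicalGroup G]
    (φ : G → ℂ) (hφ1 : φ 1 = 1)
    (h : ∀ Q : Set G, IsCompact Q → ∀ ε : ℝ, 0 < ε →
      ∃ (n : ℕ) (ψ : Fin n → G → ℂ), (∀ j, IsOfPositiveType (ψ j)) ∧
        ∀ g ∈ Q, ‖φ g - ∑ j : Fin n, ψ j g‖ ≤ ε) :
    ∀ Q : Set G, IsCompact Q → ∀ ε : ℝ, 0 < ε →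
      ∃ (n : ℕ) (χ : Fin n → G → ℂ) (c : Fin n → ℝ),
        (∀ j, IsOfPositiveType (χ j)) ∧ (∀ j, χ j 1 = 1) ∧
        (∀ j, 0 ≤ c j) ∧ (∑ j : Fin n, c j) = 1 ∧
        ∀ g ∈ Q, ‖φ g - ∑ j : Fin n, (c j : ℂ) * χ j g‖ ≤ ε := by
  intro Q hQ ε hε
  set δ := min (ε/2) (1/2) with hδdef
  have hδ : 0 < δ := lt_min (by linarith) (by norm_num)
  have hδε : δ ≤ ε/2 := min_le_left _ _
  have hδhalf : δ ≤ 1/2 := min_le_right _ _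
  obtain ⟨n, ψ, hψ, hclose⟩ := h (Q ∪ {1}) (hQ.union isCompact_singleton) δ hδ
  set s : Fin n → ℝ := fun j => (ψ j 1).re with hs
  have hs0 : ∀ j, 0 ≤ s j := fun j => (Complex.le_def.mp (posType_one_nonneg (hψ j))).1
  have hpsi1 : ∀ j, ψ j 1 = ((s j : ℝ) : ℂ) := fun j => posType_one_real (hψ j)
  set S : ℝ := ∑ j, s j with hS
  have hSsum : (∑ j : Fin n, ψ j 1) = ((S : ℝ) : ℂ) := by
    rw [hS]
    push_cast
    exact Finset.sum_congr rfl fun j _ => hpsi1 j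
  have h1 : ‖1 - ((S:ℝ):ℂ)‖ ≤ δ := by
    have := hclose 1 (Or.inr rfl)
    rwa [hφ1, hSsum] at this
  have h1' : |1 - S| ≤ δ := by
    rw [← Real.norm_eq_abs, ← Complex.norm_real]
    convert h1 using 2
    push_cast
    ring
  have hSpos : 0 < S := by
    have := abs_le.mp h1'
    linarith [this.2]
  refine ⟨n, fun j => if s j = 0 then (fun _ => (1:ℂ))
      else (fun g => (((s j)⁻¹ : ℝ) : ℂ) * ψ j g), fun j => s j / S,
      ?_, ?_, ?_, ?_, ?_⟩
  · intro j
    by_cases hj : s j = 0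
    · simpa [hj] using posType_const_one (G := G)
    · simpa [hj] using posType_smul (hψ j) (inv_nonneg.mpr (hs0 j))
  · intro j
    by_cases hj : s j = 0
    · simp [hj]
    · simp only [hj, if_false]
      rw [hpsi1 j]
      rw [← Complex.ofReal_mul, inv_mul_cancel₀ hj]
      simp
  · intro j
    exact div_nonneg (hs0 j) hSpos.le
  · rw [← Finset.sum_div, ← hS, div_self hSpos.ne']
  · intro g hg
    have hterm : ∀ j : Fin n, ((s j / S : ℝ) : ℂ) *
        (if s j = 0 then (fun _ : G => (1:ℂ)) else (fun g => (((s j)⁻¹ : ℝ) : ℂ) * ψ j g)) g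
        = ψ j g * (((S:ℝ):ℂ))⁻¹ := by
      intro j
      by_cases hj : s j = 0
      · have hb : ‖ψ j g‖ ≤ s j := posType_bound (hψ j) g
        have hz : ψ j g = 0 := by
          have h4 : ‖ψ j g‖ ≤ 0 := hj ▸ hb
          exact norm_eq_zero.mp (le_antisymm h4 (norm_nonneg _))
        simp [hj, hz]
      · simp only [hj, if_false]
        have hjne : ((s j : ℝ) : ℂ) ≠ 0 := by exact_mod_cast hj
        have hSne : ((S : ℝ) : ℂ) ≠ 0 := by exact_mod_cast hSpos.ne'
        push_cast
        field_simp
    have hsum : (∑ j : Fin n, ((s j / S : ℝ) : ℂ) *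
        (if s j = 0 then (fun _ : G => (1:ℂ)) else (fun g => (((s j)⁻¹ : ℝ) : ℂ) * ψ j g)) g)
        = (∑ j : Fin n, ψ j g) * (((S:ℝ):ℂ))⁻¹ := by
      rw [Finset.sum_mul]
      exact Finset.sum_congr rfl fun j _ => hterm j
    rw [hsum]
    set F : ℂ := ∑ j : Fin n, ψ j g with hF
    have hFabs : ‖F‖ ≤ S := by
      calc ‖F‖ ≤ ∑ j : Fin n, ‖ψ j g‖ := norm_sum_le _ _
        _ ≤ ∑ j : Fin n, s j :=
            Finset.sum_le_sum (fun j _ => posType_bound (hψ j) g)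
        _ = S := hS.symm
    have e : φ g - F * (((S:ℝ):ℂ))⁻¹ = (φ g - F) + F * (1 - (((S:ℝ):ℂ))⁻¹) := by ring
    have habs2 : ‖F * (1 - (((S:ℝ):ℂ))⁻¹)‖ ≤ δ := by
      rw [norm_mul]
      have e2 : (1 : ℂ) - (((S:ℝ):ℂ))⁻¹ = (((1 - S⁻¹ : ℝ)) : ℂ) := by push_cast; ring
      rw [e2, Complex.norm_real, Real.norm_eq_abs]
      have h3 : |1 - S⁻¹| = |1 - S| / S := by
        have : (1 - S⁻¹) = -((1 - S)/S) := by field_simp; ring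
        rw [this, abs_neg, abs_div, abs_of_pos hSpos]
      rw [h3]
      calc ‖F‖ * (|1 - S| / S) ≤ S * (|1 - S| / S) := by
            apply mul_le_mul_of_nonneg_right hFabs
            positivity
        _ = |1 - S| := by field_simp
        _ ≤ δ := h1'
    calc ‖φ g - F * (((S:ℝ):ℂ))⁻¹‖
        = ‖(φ g - F) + F * (1 - (((S:ℝ):ℂ))⁻¹)‖ := by rw [e]
      _ ≤ ‖φ g - F‖ + ‖F * (1 - (((S:ℝ):ℂ))⁻¹)‖ :=
          norm_add_le _ _
      _ ≤ δ + δ := add_le_add (hclose g (Or.inl hg)) habs2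
      _ ≤ ε := by linarith
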